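/- Let Ω = ℚ/ℤ with the metric induced from the arc-length metric on ℝ/ℤ, let n be a positive integer, and let U be the set of permutations of Ω that move every point a distance < 1/(2n). Then U generates Sym(Ω) as a group, but Uⁿ ≠ Sym(Ω). -/

import Mathlib

open Pointwise

section Helpers

variable {α : Type*}


/-- split an infinite set into two infinite pieces -/
lemma exists_split {T : Set α} (hT : T.Infinite) :
    ∃ S ⊆ T, S.Infinite ∧ (T \ S).Infinite := by
  haveI := hT.to_subtype
  let j := Infinite.natEmbedding (↥T)
  refine ⟨Set.range (fun k => (j (2*k) : α)), ?_, ?_, ?_⟩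
  · rintro x ⟨k, rfl⟩; exact (j (2*k)).2
  · apply Set.infinite_range_of_injective
    intro a b h
    have := j.injective (Subtype.val_injective h)
    omega
  · apply Set.infinite_of_injective_forall_mem
      (f := fun k => (j (2*k+1) : α)) ?_ ?_
    · intro a b h
      have := j.injective (Subtype.val_injective h)
      omega
    · intro k
      refine ⟨(j (2*k+1)).2, ?_⟩
      rintro ⟨l, hl⟩
      have := j.injective (Subtype.val_injective hl)
      omega

lemma exists_equiv_of_infinite [Countable α] {X Y : Set α} (hX : X.Infinite) (hY : Y.Infinite) :
    Nonempty (↥X ≃ ↥Y) := by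
  haveI := hX.to_subtype; haveI := hY.to_subtype
  obtain ⟨dX⟩ := (nonempty_denumerable_iff (α := ↥X)).mpr ⟨inferInstance, inferInstance⟩
  obtain ⟨dY⟩ := (nonempty_denumerable_iff (α := ↥Y)).mpr ⟨inferInstance, inferInstance⟩
  exact ⟨(dX.eqv).trans (dY.eqv).symm⟩

/-- swap two disjoint infinite sets -/
lemma swap_exists [Countable α] (C X Y : Set α) (hX : X.Infinite) (hY : Y.Infinite)
    (hXC : X ⊆ C) (hYC : Y ⊆ C) (hd : Disjoint X Y) :
    ∃ f : Equiv.Perm α, (∀ x ∉ C, f x = x) ∧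
      ∀ V : Set α, X ⊆ V → Disjoint Y V → ⇑f '' V = (V \ X) ∪ Y := by
  classical
  obtain ⟨e⟩ := exists_equiv_of_infinite hX hY
  set f : α → α := fun x =>
    if hx : x ∈ X then (e ⟨x, hx⟩ : α) else if hy : x ∈ Y then (e.symm ⟨x, hy⟩ : α) else x with hf
  have hXY : ∀ x (hx : x ∈ X), f x = (e ⟨x, hx⟩ : α) := by
    intro x hx; simp [hf, hx]
  have hYX : ∀ x (hx : x ∈ Y), f x = (e.symm ⟨x, hx⟩ : α) := by
    intro x hx
    have : x ∉ X := fun h => (hd.ne_of_mem h hx) rfl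
    simp [hf, this, hx]
  have hid : ∀ x, x ∉ X → x ∉ Y → f x = x := by
    intro x h1 h2; simp [hf, h1, h2]
  have hinv : Function.Involutive f := by
    intro x
    by_cases hx : x ∈ X
    · rw [hXY x hx]
      have hy : (e ⟨x, hx⟩ : α) ∈ Y := (e ⟨x, hx⟩).2
      rw [hYX _ hy]
      simp
    · by_cases hy : x ∈ Y
      · rw [hYX x hy]
        have hx2 : (e.symm ⟨x, hy⟩ : α) ∈ X := (e.symm ⟨x, hy⟩).2
        rw [hXY _ hx2]
        simp
      · rw [hid x hx hy, hid x hx hy]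
  refine ⟨hinv.toPerm f, ?_, ?_⟩
  · intro x hx
    exact hid x (fun h => hx (hXC h)) (fun h => hx (hYC h))
  · intro V hXV hYV
    ext y
    constructor
    · rintro ⟨v, hv, rfl⟩
      show f v ∈ _
      by_cases hvX : v ∈ X
      · rw [hXY v hvX]; exact Or.inr (e ⟨v, hvX⟩).2
      · have hvY : v ∉ Y := fun h => (hYV.ne_of_mem h hv) rfl
        rw [hid v hvX hvY]; exact Or.inl ⟨hv, hvX⟩
    · rintro (⟨hyV, hyX⟩ | hyY)
      · have hyY : y ∉ Y := fun h => (hYV.ne_of_mem h hyV) rfl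
        exact ⟨y, hyV, hid y hyX hyY⟩
      · refine ⟨(e.symm ⟨y, hyY⟩ : α), hXV (e.symm ⟨y, hyY⟩).2, ?_⟩
        show f _ = y
        rw [hXY _ (e.symm ⟨y, hyY⟩).2]
        simp

lemma perm_maps_support (f : Equiv.Perm α) (S : Set α) (hs : ∀ x ∉ S, f x = x) :
    ∀ x ∈ S, f x ∈ S := by
  intro x hx
  by_contra hgx
  have h2 := hs (f x) hgx
  exact hgx ((f.injective h2).symm ▸ hx)

set_option maxHeartbeats 1000000 in
lemma move_lemma [Countable α]
    (A B : Set α)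
    (hQ : (A ∩ B).Infinite) (hP : (A \ B).Infinite) (hR : (B \ A).Infinite)
    (H : Subgroup (Equiv.Perm α))
    (hA : ∀ f : Equiv.Perm α, (∀ x ∉ A, f x = x) → f ∈ H)
    (hB : ∀ f : Equiv.Perm α, (∀ x ∉ B, f x = x) → f ∈ H)
    (V : Set α) (hVsub : V ⊆ A ∪ B) (hVinf : V.Infinite)
    (hWinf : ((A ∪ B) \ V).Infinite) :
    ∃ h : Equiv.Perm α, h ∈ H ∧ (∀ x ∉ A ∪ B, h x = x) ∧ ⇑h '' V = A := by
  classical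
  -- step combinator
  have step : ∀ (C : Set α), (C = A ∨ C = B) → ∀ (X Y V' : Set α), X.Infinite → Y.Infinite →
      X ⊆ C → Y ⊆ C → Disjoint X Y → X ⊆ V' → Disjoint Y V' →
      ∃ f : Equiv.Perm α, f ∈ H ∧ (∀ x ∉ A ∪ B, f x = x) ∧ ⇑f '' V' = (V' \ X) ∪ Y := by
    rintro C hC X Y V' hX hY hXC hYC hd hXV hYV
    obtain ⟨f, hsupp, himg⟩ := swap_exists C X Y hX hY hXC hYC hd
    refine ⟨f, ?_, ?_, himg V' hXV hYV⟩
    · rcases hC with rfl | rfl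
      exacts [hA f hsupp, hB f hsupp]
    · intro x hx
      apply hsupp
      rcases hC with rfl | rfl
      · exact fun h => hx (Or.inl h)
      · exact fun h => hx (Or.inr h)
  -- Stage 1 : make V₁ ∩ (A∩B) infinite
  obtain ⟨f₁, V₁, hf₁H, hf₁s, hf₁i, hV₁sub, hW₁inf, hV₁Q⟩ :
      ∃ (f : Equiv.Perm α) (V₁ : Set α), f ∈ H ∧ (∀ x ∉ A ∪ B, f x = x) ∧ ⇑f '' V = V₁ ∧
        V₁ ⊆ A ∪ B ∧ ((A ∪ B) \ V₁).Infinite ∧ (V₁ ∩ (A ∩ B)).Infinite := by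
    by_cases h1 : (V ∩ (A ∩ B)).Infinite
    · exact ⟨1, V, Subgroup.one_mem H, fun x _ => rfl, by simp, hVsub, hWinf, h1⟩
    · have hVQfin : (V ∩ (A ∩ B)).Finite := Set.not_infinite.mp h1
      have hQV : ((A ∩ B) \ V).Infinite := by
        have he : (A ∩ B) \ V = (A ∩ B) \ (V ∩ (A ∩ B)) := by
          ext x; simp only [Set.mem_diff, Set.mem_inter_iff]; tauto
        rw [he]; exact hQ.diff hVQfin
      have hPR : (V ∩ (A \ B)).Infinite ∨ (V ∩ (B \ A)).Infinite := by
        by_contra hcon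
        push_neg at hcon
        obtain ⟨hc1, hc2⟩ := hcon
        refine hVinf (Set.Finite.subset ((hc1.union hVQfin).union hc2) ?_)
        intro x hx
        have := hVsub hx
        simp only [Set.mem_union, Set.mem_inter_iff, Set.mem_diff] at *
        tauto
      rcases hPR with hc | hc
      · obtain ⟨f, hfH, hfs, hfi⟩ := step A (Or.inl rfl) (V ∩ (A \ B)) ((A ∩ B) \ V) V hc hQV
          (fun x hx => hx.2.1) (fun x hx => hx.1.1)
          (Set.disjoint_left.mpr (fun x hx hx' => hx'.2 hx.1))
          Set.inter_subset_left
          (Set.disjoint_left.mpr (fun x hx hx' => hx.2 hx'))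
        refine ⟨f, (V \ (V ∩ (A \ B))) ∪ ((A ∩ B) \ V), hfH, hfs, hfi, ?_, ?_, ?_⟩
        · rintro x (⟨hx, -⟩ | ⟨⟨hx, -⟩, -⟩)
          exacts [hVsub hx, Or.inl hx]
        · refine Set.Infinite.mono ?_ hc
          rintro x ⟨hxV, hxA, hxB⟩
          refine ⟨Or.inl hxA, ?_⟩
          rintro (⟨-, hno⟩ | ⟨⟨-, hB'⟩, -⟩)
          · exact hno ⟨hxV, hxA, hxB⟩
          · exact hxB hB'
        · exact Set.Infinite.mono (fun x hx => ⟨Or.inr hx, hx.1⟩) hQV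
      · obtain ⟨f, hfH, hfs, hfi⟩ := step B (Or.inr rfl) (V ∩ (B \ A)) ((A ∩ B) \ V) V hc hQV
          (fun x hx => hx.2.1) (fun x hx => hx.1.2)
          (Set.disjoint_left.mpr (fun x hx hx' => hx'.2 hx.1))
          Set.inter_subset_left
          (Set.disjoint_left.mpr (fun x hx hx' => hx.2 hx'))
        refine ⟨f, (V \ (V ∩ (B \ A))) ∪ ((A ∩ B) \ V), hfH, hfs, hfi, ?_, ?_, ?_⟩
        · rintro x (⟨hx, -⟩ | ⟨⟨hx, -⟩, -⟩)
          exacts [hVsub hx, Or.inl hx]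
        · refine Set.Infinite.mono ?_ hc
          rintro x ⟨hxV, hxB, hxA⟩
          refine ⟨Or.inr hxB, ?_⟩
          rintro (⟨-, hno⟩ | ⟨⟨hA', -⟩, -⟩)
          · exact hno ⟨hxV, hxB, hxA⟩
          · exact hxA hA'
        · exact Set.Infinite.mono (fun x hx => ⟨Or.inr hx, hx.1⟩) hQV
  -- Stage 2 : additionally make (A∩B) \ V₂ infinite
  obtain ⟨f₂, V₂, hf₂H, hf₂s, hf₂i, hV₂sub, hV₂Q, hQV₂⟩ :
      ∃ (f : Equiv.Perm α) (V₂ : Set α), f ∈ H ∧ (∀ x ∉ A ∪ B, f x = x) ∧ ⇑f '' V₁ = V₂ ∧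
        V₂ ⊆ A ∪ B ∧ (V₂ ∩ (A ∩ B)).Infinite ∧ ((A ∩ B) \ V₂).Infinite := by
    by_cases h2 : ((A ∩ B) \ V₁).Infinite
    · exact ⟨1, V₁, Subgroup.one_mem H, fun x _ => rfl, by simp, hV₁sub, hV₁Q, h2⟩
    · obtain ⟨S, hSsub, hSinf, hSdiff⟩ := exists_split hV₁Q
      have hYor : ((A \ B) \ V₁).Infinite ∨ ((B \ A) \ V₁).Infinite := by
        by_contra hcon
        push_neg at hcon
        obtain ⟨hc1, hc2⟩ := hcon
        refine hW₁inf (Set.Finite.subset ((hc1.union (Set.not_infinite.mp h2)).union hc2) ?_)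
        intro x hx
        simp only [Set.mem_union, Set.mem_inter_iff, Set.mem_diff] at *
        tauto
      have hSV : S ⊆ V₁ := fun x hx => (hSsub hx).1
      have hSQ : S ⊆ A ∩ B := fun x hx => (hSsub hx).2
      rcases hYor with hc | hc
      · obtain ⟨f, hfH, hfs, hfi⟩ := step A (Or.inl rfl) S ((A \ B) \ V₁) V₁ hSinf hc
          (fun x hx => (hSQ hx).1) (fun x hx => hx.1.1)
          (Set.disjoint_left.mpr (fun x hx hx' => hx'.2 (hSV hx)))
          hSV
          (Set.disjoint_left.mpr (fun x hx hx' => hx.2 hx'))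
        refine ⟨f, (V₁ \ S) ∪ ((A \ B) \ V₁), hfH, hfs, hfi, ?_, ?_, ?_⟩
        · rintro x (⟨hx, -⟩ | ⟨⟨hx, -⟩, -⟩)
          exacts [hV₁sub hx, Or.inl hx]
        · refine Set.Infinite.mono ?_ hSdiff
          rintro x ⟨⟨hxV, hxQ⟩, hxS⟩
          exact ⟨Or.inl ⟨hxV, hxS⟩, hxQ⟩
        · refine Set.Infinite.mono ?_ hSinf
          intro x hx
          refine ⟨hSQ hx, ?_⟩
          rintro (⟨-, hno⟩ | ⟨⟨-, hB'⟩, -⟩)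
          · exact hno hx
          · exact hB' (hSQ hx).2
      · obtain ⟨f, hfH, hfs, hfi⟩ := step B (Or.inr rfl) S ((B \ A) \ V₁) V₁ hSinf hc
          (fun x hx => (hSQ hx).2) (fun x hx => hx.1.1)
          (Set.disjoint_left.mpr (fun x hx hx' => hx'.2 (hSV hx)))
          hSV
          (Set.disjoint_left.mpr (fun x hx hx' => hx.2 hx'))
        refine ⟨f, (V₁ \ S) ∪ ((B \ A) \ V₁), hfH, hfs, hfi, ?_, ?_, ?_⟩
        · rintro x (⟨hx, -⟩ | ⟨⟨hx, -⟩, -⟩)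
          exacts [hV₁sub hx, Or.inr hx]
        · refine Set.Infinite.mono ?_ hSdiff
          rintro x ⟨⟨hxV, hxQ⟩, hxS⟩
          exact ⟨Or.inl ⟨hxV, hxS⟩, hxQ⟩
        · refine Set.Infinite.mono ?_ hSinf
          intro x hx
          refine ⟨hSQ hx, ?_⟩
          rintro (⟨-, hno⟩ | ⟨⟨-, hA'⟩, -⟩)
          · exact hno hx
          · exact hA' (hSQ hx).1
  -- Stage 3 : additionally make V₃ ∩ (B \ A) infinite
  obtain ⟨f₃, V₃, hf₃H, hf₃s, hf₃i, hV₃sub, hV₃Q, hQV₃, hV₃R⟩ :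
      ∃ (f : Equiv.Perm α) (V₃ : Set α), f ∈ H ∧ (∀ x ∉ A ∪ B, f x = x) ∧ ⇑f '' V₂ = V₃ ∧
        V₃ ⊆ A ∪ B ∧ (V₃ ∩ (A ∩ B)).Infinite ∧ ((A ∩ B) \ V₃).Infinite ∧
        (V₃ ∩ (B \ A)).Infinite := by
    by_cases h3 : (V₂ ∩ (B \ A)).Infinite
    · exact ⟨1, V₂, Subgroup.one_mem H, fun x _ => rfl, by simp, hV₂sub, hV₂Q, hQV₂, h3⟩
    · have hRV : ((B \ A) \ V₂).Infinite := by
        have he : (B \ A) \ V₂ = (B \ A) \ (V₂ ∩ (B \ A)) := by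
          ext x; simp only [Set.mem_diff, Set.mem_inter_iff]; tauto
        rw [he]; exact hR.diff (Set.not_infinite.mp h3)
      obtain ⟨S, hSsub, hSinf, hSdiff⟩ := exists_split hV₂Q
      have hSV : S ⊆ V₂ := fun x hx => (hSsub hx).1
      have hSQ : S ⊆ A ∩ B := fun x hx => (hSsub hx).2
      obtain ⟨f, hfH, hfs, hfi⟩ := step B (Or.inr rfl) S ((B \ A) \ V₂) V₂ hSinf hRV
        (fun x hx => (hSQ hx).2) (fun x hx => hx.1.1)
        (Set.disjoint_left.mpr (fun x hx hx' => hx'.2 (hSV hx)))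
        hSV
        (Set.disjoint_left.mpr (fun x hx hx' => hx.2 hx'))
      refine ⟨f, (V₂ \ S) ∪ ((B \ A) \ V₂), hfH, hfs, hfi, ?_, ?_, ?_, ?_⟩
      · rintro x (⟨hx, -⟩ | ⟨⟨hx, -⟩, -⟩)
        exacts [hV₂sub hx, Or.inr hx]
      · refine Set.Infinite.mono ?_ hSdiff
        rintro x ⟨⟨hxV, hxQ⟩, hxS⟩
        exact ⟨Or.inl ⟨hxV, hxS⟩, hxQ⟩
      · refine Set.Infinite.mono ?_ hQV₂
        rintro x ⟨hxQ, hxV⟩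
        refine ⟨hxQ, ?_⟩
        rintro (⟨hx, -⟩ | ⟨⟨-, hA'⟩, -⟩)
        · exact hxV hx
        · exact hA' hxQ.1
      · refine Set.Infinite.mono ?_ hRV
        intro x hx
        exact ⟨Or.inr hx, hx.1⟩
  -- Stage 4
  obtain ⟨Q₁, hQ₁sub, hQ₁inf, hQ₁diff⟩ := exists_split hQV₃
  obtain ⟨f₄, hf₄H, hf₄s, hf₄i⟩ := step A (Or.inl rfl) (V₃ ∩ (A ∩ B)) (((A \ B) \ V₃) ∪ Q₁) V₃
    hV₃Q (hQ₁inf.mono Set.subset_union_right)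
    (fun x hx => hx.2.1)
    (by rintro x (hx | hx); exacts [hx.1.1, ((hQ₁sub hx).1).1])
    (Set.disjoint_left.mpr (by rintro x hx (hx' | hx'); exacts [hx'.2 hx.1, (hQ₁sub hx').2 hx.1]))
    Set.inter_subset_left
    (Set.disjoint_left.mpr (by rintro x (hx | hx) hx'; exacts [hx.2 hx', (hQ₁sub hx).2 hx']))
  have hV₃R' := hV₃R
  -- facts about V₄ := (V₃ \ (V₃ ∩ (A ∩ B))) ∪ (((A \ B) \ V₃) ∪ Q₁)
  have hV₄R : ((V₃ \ (V₃ ∩ (A ∩ B))) ∪ (((A \ B) \ V₃) ∪ Q₁)) ∩ (B \ A) = V₃ ∩ (B \ A) := by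
    ext x
    have h1 : x ∈ Q₁ → x ∈ A ∧ x ∈ B ∧ x ∉ V₃ := by
      intro hx; have := hQ₁sub hx; exact ⟨this.1.1, this.1.2, this.2⟩
    simp only [Set.mem_union, Set.mem_inter_iff, Set.mem_diff]
    tauto
  have hV₄Rinf : (((V₃ \ (V₃ ∩ (A ∩ B))) ∪ (((A \ B) \ V₃) ∪ Q₁)) ∩ (B \ A)).Infinite :=
    hV₄R ▸ hV₃R
  have hQV₄ : ((A ∩ B) \ ((V₃ \ (V₃ ∩ (A ∩ B))) ∪ (((A \ B) \ V₃) ∪ Q₁))).Infinite := by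
    refine Set.Infinite.mono ?_ hQ₁diff
    intro x hx
    simp only [Set.mem_union, Set.mem_inter_iff, Set.mem_diff] at hx ⊢
    tauto
  -- Stage 5
  obtain ⟨f₅, hf₅H, hf₅s, hf₅i⟩ := step B (Or.inr rfl)
    (((V₃ \ (V₃ ∩ (A ∩ B))) ∪ (((A \ B) \ V₃) ∪ Q₁)) ∩ (B \ A))
    ((A ∩ B) \ ((V₃ \ (V₃ ∩ (A ∩ B))) ∪ (((A \ B) \ V₃) ∪ Q₁)))
    ((V₃ \ (V₃ ∩ (A ∩ B))) ∪ (((A \ B) \ V₃) ∪ Q₁))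
    hV₄Rinf hQV₄
    (fun x hx => hx.2.1) (fun x hx => hx.1.2)
    (Set.disjoint_left.mpr (fun x hx hx' => hx.2.2 hx'.1.1))
    Set.inter_subset_left
    (Set.disjoint_left.mpr (fun x hx hx' => hx.2 hx'))
  have hfinal : (((V₃ \ (V₃ ∩ (A ∩ B))) ∪ (((A \ B) \ V₃) ∪ Q₁)) \
      (((V₃ \ (V₃ ∩ (A ∩ B))) ∪ (((A \ B) \ V₃) ∪ Q₁)) ∩ (B \ A))) ∪
      ((A ∩ B) \ ((V₃ \ (V₃ ∩ (A ∩ B))) ∪ (((A \ B) \ V₃) ∪ Q₁))) = A := by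
    ext x
    have h1 : x ∈ Q₁ → x ∈ A ∧ x ∈ B ∧ x ∉ V₃ := by
      intro hx; have := hQ₁sub hx; exact ⟨this.1.1, this.1.2, this.2⟩
    have h2 : x ∈ V₃ → x ∈ A ∨ x ∈ B := fun hx => hV₃sub hx
    simp only [Set.mem_union, Set.mem_inter_iff, Set.mem_diff]
    tauto
  refine ⟨f₅ * f₄ * f₃ * f₂ * f₁, ?_, ?_, ?_⟩
  · exact H.mul_mem (H.mul_mem (H.mul_mem (H.mul_mem hf₅H hf₄H) hf₃H) hf₂H) hf₁H
  · intro x hx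
    simp only [Equiv.Perm.mul_apply]
    rw [hf₁s x hx, hf₂s x hx, hf₃s x hx, hf₄s x hx, hf₅s x hx]
  · have hco : ⇑(f₅ * f₄ * f₃ * f₂ * f₁) '' V
        = ⇑f₅ '' (⇑f₄ '' (⇑f₃ '' (⇑f₂ '' (⇑f₁ '' V)))) := by
      simp only [Equiv.Perm.coe_mul, Set.image_comp]
    rw [hco, hf₁i, hf₂i, hf₃i, hf₄i, hf₅i, hfinal]

lemma key_lemma [Countable α]
    (A B : Set α)
    (hQ : (A ∩ B).Infinite) (hP : (A \ B).Infinite) (hR : (B \ A).Infinite)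
    (H : Subgroup (Equiv.Perm α))
    (hA : ∀ f : Equiv.Perm α, (∀ x ∉ A, f x = x) → f ∈ H)
    (hB : ∀ f : Equiv.Perm α, (∀ x ∉ B, f x = x) → f ∈ H)
    (g : Equiv.Perm α) (hg : ∀ x ∉ A ∪ B, g x = x) : g ∈ H := by
  classical
  have hmaps : ∀ (f : Equiv.Perm α) (S : Set α), (∀ x ∉ S, f x = x) → ∀ x ∈ S, f x ∈ S := by
    intro f S hs x hx
    by_contra hgx
    have h2 := hs (f x) hgx
    exact hgx ((f.injective h2).symm ▸ hx)
  -- V := g '' A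
  have hVsub : ⇑g '' A ⊆ A ∪ B := by
    rintro y ⟨x, hx, rfl⟩
    exact hmaps g (A ∪ B) hg x (Or.inl hx)
  have hainf : A.Infinite := by
    refine Set.Infinite.mono ?_ hQ; exact Set.inter_subset_left
  have hVinf : (⇑g '' A).Infinite := hainf.image g.injective.injOn
  have hWinf : ((A ∪ B) \ (⇑g '' A)).Infinite := by
    refine Set.Infinite.mono ?_ (hR.image g.injective.injOn)
    rintro y ⟨x, ⟨hxB, hxA⟩, rfl⟩
    refine ⟨hmaps g (A ∪ B) hg x (Or.inr hxB), ?_⟩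
    rintro ⟨x', hx', hxx⟩
    exact hxA ((g.injective hxx) ▸ hx')
  obtain ⟨h, hhH, hhs, hhi⟩ := move_lemma A B hQ hP hR H hA hB (⇑g '' A) hVsub hVinf hWinf
  -- g' := h * g satisfies g' '' A = A
  have hg'A : ⇑(h * g) '' A = A := by
    rw [Equiv.Perm.coe_mul, Set.image_comp, hhi]
  have hiff : ∀ x, x ∈ A ↔ (h * g) x ∈ A := by
    intro x
    constructor
    · intro hx
      rw [← hg'A]; exact ⟨x, hx, rfl⟩
    · intro hx
      rw [← hg'A] at hx
      obtain ⟨x', hx', hxx⟩ := hx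
      exact ((h * g).injective hxx) ▸ hx'
  set u : Equiv.Perm α := Equiv.Perm.ofSubtype ((h * g).subtypePerm (fun x => (hiff x).symm)) with hu
  have huA : ∀ x ∉ A, u x = x := fun x hx => Equiv.Perm.ofSubtype_apply_of_not_mem _ hx
  have huAmem : ∀ x (hx : x ∈ A), u x = (h * g) x := by
    intro x hx
    rw [hu, Equiv.Perm.ofSubtype_apply_of_mem _ hx]
    rfl
  have hvB : ∀ x ∉ B, (u⁻¹ * (h * g)) x = x := by
    intro x hx
    by_cases hxA : x ∈ A
    · have h3 : u x = h (g x) := by simpa using huAmem x hxA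
      simp only [Equiv.Perm.mul_apply]
      rw [← h3, Equiv.Perm.inv_def, Equiv.symm_apply_apply]
    · have hxAB : x ∉ A ∪ B := by rintro (h1 | h1); exacts [hxA h1, hx h1]
      have h1 : g x = x := hg x hxAB
      have h2 : h x = x := hhs x hxAB
      simp only [Equiv.Perm.mul_apply, h1, h2]
      have : u x = x := huA x hxA
      exact (Equiv.injective u) (by rw [Equiv.Perm.inv_def, Equiv.apply_symm_apply, this])
  have : g = h⁻¹ * (u * (u⁻¹ * (h * g))) := by group
  rw [this]
  exact H.mul_mem (H.inv_mem hhH) (H.mul_mem (hA u huA) (hB _ hvB))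

end Helpers

instance : Countable (AddCircle (1 : ℚ)) := Quotient.countable

noncomputable section ArcSection

local instance : Fact ((0:ℚ) < 1) := ⟨one_pos⟩

def qrep (x : AddCircle (1:ℚ)) : ℚ := (AddCircle.equivIco 1 0 x : ℚ)

lemma qrep_mem (x : AddCircle (1:ℚ)) : 0 ≤ qrep x ∧ qrep x < 1 := by
  have h := (AddCircle.equivIco 1 0 x).2
  obtain ⟨h1, h2⟩ := h
  exact ⟨h1, lt_of_lt_of_eq h2 (zero_add 1)⟩

lemma coe_qrep (x : AddCircle (1:ℚ)) : ((qrep x : ℚ) : AddCircle (1:ℚ)) = x :=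
  (AddCircle.equivIco 1 0).symm_apply_apply x

lemma qrep_coe (q : ℚ) (h0 : 0 ≤ q) (h1 : q < 1) : qrep (q : AddCircle (1:ℚ)) = q := by
  have h : ((qrep (q : AddCircle (1:ℚ)) : ℚ) : AddCircle (1:ℚ)) = ((q:ℚ) : AddCircle (1:ℚ)) :=
    coe_qrep _
  have hx : qrep (q : AddCircle (1:ℚ)) ∈ Set.Ico (0:ℚ) (0 + 1) := by
    rw [zero_add]; exact ⟨(qrep_mem _).1, (qrep_mem _).2⟩
  have hy : q ∈ Set.Ico (0:ℚ) (0 + 1) := by rw [zero_add]; exact ⟨h0, h1⟩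
  exact (AddCircle.coe_eq_coe_iff_of_mem_Ico hx hy).mp h

lemma coe_add_q (p q : ℚ) : ((p + q : ℚ) : AddCircle (1:ℚ)) = (p : AddCircle (1:ℚ)) + (q : AddCircle (1:ℚ)) := rfl

def arc (a b : ℚ) : Set (AddCircle (1:ℚ)) := {x | a ≤ qrep x ∧ qrep x < b}

lemma arc_infinite (a b : ℚ) (h0 : 0 ≤ a) (hab : a < b) (h1 : b ≤ 1) : (arc a b).Infinite := by
  apply Set.infinite_of_injective_forall_mem
    (f := fun k : ℕ => ((a + (b-a)/(k+2) : ℚ) : AddCircle (1:ℚ))) ?_ ?_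
  · intro k l h
    have hk : ∀ m : ℕ, (0:ℚ) ≤ a + (b-a)/(m+2) ∧ a + (b-a)/(m+2) < 1 := by
      intro m
      have hm2 : (0:ℚ) < (m:ℚ) + 2 := by positivity
      have hba : (0:ℚ) < b - a := by linarith
      constructor
      · have : (0:ℚ) < (b-a)/(m+2) := by positivity
        linarith
      · have h2 : (b-a)/(m+2) ≤ (b-a)/2 := by
          apply div_le_div_of_nonneg_left (by linarith) (by norm_num) (by linarith)
        nlinarith
    have := congrArg qrep h
    rw [qrep_coe _ (hk k).1 (hk k).2, qrep_coe _ (hk l).1 (hk l).2] at this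
    have hba2 : (0:ℚ) < b - a := by linarith
    have hba' : b - a ≠ 0 := ne_of_gt hba2
    have h3 : (b-a) * ((k:ℚ)+2)⁻¹ = (b-a) * ((l:ℚ)+2)⁻¹ := by
      rw [div_eq_mul_inv, div_eq_mul_inv] at this
      linarith
    have h4 := mul_left_cancel₀ hba' h3
    have h5 : ((k:ℚ)+2) = ((l:ℚ)+2) := inv_injective h4
    have : (k:ℚ) = l := by linarith
    exact_mod_cast this
  · intro k
    have hm2 : (0:ℚ) < (k:ℚ) + 2 := by positivity
    have hba : (0:ℚ) < b - a := by linarith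
    have hmem : (0:ℚ) ≤ a + (b-a)/(k+2) ∧ a + (b-a)/(k+2) < 1 := by
      constructor
      · have : (0:ℚ) < (b-a)/(k+2) := by positivity
        linarith
      · have h2 : (b-a)/(k+2) ≤ (b-a)/2 := by
          apply div_le_div_of_nonneg_left (by linarith) (by norm_num) (by linarith)
        nlinarith
    show _ ≤ qrep _ ∧ qrep _ < _
    rw [qrep_coe _ hmem.1 hmem.2]
    constructor
    · have : (0:ℚ) < (b-a)/(k+2) := by positivity
      linarith
    · have h2 : (b-a)/(k+2) ≤ (b-a)/2 := by
        apply div_le_div_of_nonneg_left (by linarith) (by norm_num) (by linarith)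
      nlinarith

lemma arc_union_arc {a b c d : ℚ} (h1 : a ≤ c) (h2 : c ≤ b) (h3 : b ≤ d) :
    arc a b ∪ arc c d = arc a d := by
  ext x
  simp only [arc, Set.mem_union, Set.mem_setOf_eq]
  constructor
  · rintro (⟨hx1, hx2⟩ | ⟨hx1, hx2⟩) <;> constructor <;> linarith
  · rintro ⟨hx1, hx2⟩
    by_cases h : qrep x < b
    · exact Or.inl ⟨hx1, h⟩
    · exact Or.inr ⟨by linarith, hx2⟩

lemma arc_inter_arc {a b c d : ℚ} (h1 : a ≤ c) (h2 : b ≤ d) :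
    arc a b ∩ arc c d = arc c b := by
  ext x
  simp only [arc, Set.mem_inter_iff, Set.mem_setOf_eq]
  constructor
  · rintro ⟨⟨hx1, hx2⟩, ⟨hx3, hx4⟩⟩
    exact ⟨hx3, hx2⟩
  · rintro ⟨hx1, hx2⟩
    exact ⟨⟨by linarith, hx2⟩, ⟨hx1, by linarith⟩⟩

lemma arc_diff_arc1 {a b c d : ℚ} (h1 : a ≤ c) (h2 : c ≤ b) (h3 : b ≤ d) :
    arc a b \ arc c d = arc a c := by
  ext x
  simp only [arc, Set.mem_diff, Set.mem_setOf_eq, not_and, not_lt]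
  constructor
  · rintro ⟨⟨hx1, hx2⟩, hx3⟩
    refine ⟨hx1, ?_⟩
    by_contra hc
    push_neg at hc
    have := hx3 hc
    linarith
  · rintro ⟨hx1, hx2⟩
    exact ⟨⟨hx1, by linarith⟩, fun hc => by linarith⟩

lemma arc_diff_arc2 {b c d : ℚ} (h1 : c ≤ b) (h2 : b ≤ d) :
    arc c d \ arc 0 b = arc b d := by
  ext x
  have h0 := (qrep_mem x).1
  simp only [arc, Set.mem_diff, Set.mem_setOf_eq, not_and, not_lt]
  constructor
  · rintro ⟨⟨hx1, hx2⟩, hx3⟩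
    exact ⟨hx3 h0, hx2⟩
  · rintro ⟨hx1, hx2⟩
    exact ⟨⟨by linarith, hx2⟩, fun _ => by linarith⟩

end ArcSection

theorem stmt8 (n : ℕ) (hn : 0 < n)
    (U : Set (Equiv.Perm (AddCircle (1 : ℚ))))
    (hUdef : U = {f | ∀ x : AddCircle (1 : ℚ),
      ∃ q : ℚ, |q| < 1 / (2 * n) ∧ f x = x + (q : AddCircle (1 : ℚ))}) :
    Subgroup.closure U = ⊤ ∧ U ^ n ≠ Set.univ := by
  have hn' : (0:ℚ) < (n:ℚ) := by exact_mod_cast hn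
  have h2n : (0:ℚ) < 2 * (n:ℚ) := by linarith
  have hn1 : (1:ℚ) ≤ (n:ℚ) := by exact_mod_cast hn
  constructor
  · -- generation
    -- permutations supported on a short arc lie in U
    have hshort : ∀ a b : ℚ, 0 ≤ a → b ≤ 1 → b - a ≤ 1 / (2 * (n:ℚ)) →
        ∀ f : Equiv.Perm (AddCircle (1:ℚ)), (∀ x ∉ arc a b, f x = x) → f ∈ U := by
      intro a b ha hb hlen f hf
      rw [hUdef]
      intro x
      by_cases hx : x ∈ arc a b
      · have hfx : f x ∈ arc a b := perm_maps_support f _ hf x hx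
        obtain ⟨hr1, hr2⟩ := hx
        obtain ⟨hr3, hr4⟩ := hfx
        refine ⟨qrep (f x) - qrep x, ?_, ?_⟩
        · rw [abs_lt]
          constructor <;> [linarith; linarith]
        · calc f x = ((qrep (f x) : ℚ) : AddCircle (1:ℚ)) := (coe_qrep _).symm
            _ = ((qrep x + (qrep (f x) - qrep x) : ℚ) : AddCircle (1:ℚ)) := by
                congr 1
                ring
            _ = x + ((qrep (f x) - qrep x : ℚ) : AddCircle (1:ℚ)) := by
                rw [coe_add_q, coe_qrep]
      · refine ⟨0, ?_, ?_⟩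
        · rw [abs_zero]
          positivity
        · rw [hf x hx]
          norm_num
    -- the main induction on unions of short arcs
    set m : ℕ := 8 * n with hm
    have hm8 : 8 ≤ m := by omega
    have hmq : (0:ℚ) < (m:ℚ) := by
      have : 0 < m := by omega
      exact_mod_cast this
    have hmval : (m:ℚ) = 8 * (n:ℚ) := by rw [hm]; push_cast; ring
    have main : ∀ k : ℕ, 2 ≤ k → k ≤ m →
        ∀ g : Equiv.Perm (AddCircle (1:ℚ)), (∀ x ∉ arc 0 ((k:ℚ)/(m:ℚ)), g x = x) →
          g ∈ Subgroup.closure U := by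
      intro k hk2
      induction k, hk2 using Nat.le_induction with
      | base =>
        intro hkm g hg
        push_cast at hg
        apply Subgroup.subset_closure
        apply hshort 0 ((2:ℚ)/(m:ℚ)) le_rfl ?_ ?_ g ?_
        · rw [div_le_one hmq]
          linarith
        · rw [hmval, sub_zero, div_le_div_iff₀ (by linarith) h2n]
          linarith
        · intro x hx
          exact hg x hx
      | succ k hk ih =>
        intro hkm g hg
        push_cast at hg
        have hkq : (2:ℚ) ≤ (k:ℚ) := by exact_mod_cast hk
        have hkmq : (k:ℚ) + 1 ≤ (m:ℚ) := by exact_mod_cast hkm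
        have e0 : (0:ℚ) ≤ ((k:ℚ)-1)/(m:ℚ) := div_nonneg (by linarith) (le_of_lt hmq)
        have e1 : ((k:ℚ)-1)/(m:ℚ) < (k:ℚ)/(m:ℚ) := by
          rw [div_lt_div_iff_of_pos_right hmq]
          linarith
        have e2 : (k:ℚ)/(m:ℚ) < ((k:ℚ)+1)/(m:ℚ) := by
          rw [div_lt_div_iff_of_pos_right hmq]
          linarith
        have e3 : ((k:ℚ)+1)/(m:ℚ) ≤ 1 := by
          rw [div_le_one hmq]
          linarith
        have e4 : (0:ℚ) < ((k:ℚ)-1)/(m:ℚ) := by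
          apply div_pos (by linarith) hmq
        have hQ : arc 0 ((k:ℚ)/(m:ℚ)) ∩ arc (((k:ℚ)-1)/(m:ℚ)) (((k:ℚ)+1)/(m:ℚ))
            = arc (((k:ℚ)-1)/(m:ℚ)) ((k:ℚ)/(m:ℚ)) :=
          arc_inter_arc e0 (le_of_lt e2)
        have hP : arc 0 ((k:ℚ)/(m:ℚ)) \ arc (((k:ℚ)-1)/(m:ℚ)) (((k:ℚ)+1)/(m:ℚ))
            = arc 0 (((k:ℚ)-1)/(m:ℚ)) :=
          arc_diff_arc1 e0 (le_of_lt e1) (le_of_lt e2)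
        have hR : arc (((k:ℚ)-1)/(m:ℚ)) (((k:ℚ)+1)/(m:ℚ)) \ arc 0 ((k:ℚ)/(m:ℚ))
            = arc ((k:ℚ)/(m:ℚ)) (((k:ℚ)+1)/(m:ℚ)) :=
          arc_diff_arc2 (le_of_lt e1) (le_of_lt e2)
        have hUn : arc 0 ((k:ℚ)/(m:ℚ)) ∪ arc (((k:ℚ)-1)/(m:ℚ)) (((k:ℚ)+1)/(m:ℚ))
            = arc 0 (((k:ℚ)+1)/(m:ℚ)) :=
          arc_union_arc e0 (le_of_lt e1) (le_of_lt e2)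
        apply key_lemma (arc 0 ((k:ℚ)/(m:ℚ))) (arc (((k:ℚ)-1)/(m:ℚ)) (((k:ℚ)+1)/(m:ℚ)))
        · rw [hQ]
          exact arc_infinite _ _ e0 e1 (by linarith)
        · rw [hP]
          exact arc_infinite _ _ le_rfl e4 (by linarith)
        · rw [hR]
          exact arc_infinite _ _ (div_nonneg (by linarith) (le_of_lt hmq)) e2 e3
        · intro f hf
          exact ih (by omega) f hf
        · intro f hf
          apply Subgroup.subset_closure
          apply hshort (((k:ℚ)-1)/(m:ℚ)) (((k:ℚ)+1)/(m:ℚ)) e0 e3 ?_ f hf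
          have hsub : ((k:ℚ)+1)/(m:ℚ) - ((k:ℚ)-1)/(m:ℚ) = 2/(m:ℚ) := by
            ring
          rw [hsub, hmval, div_le_div_iff₀ (by linarith) h2n]
          linarith
        · intro x hx
          apply hg
          rw [hUn] at hx
          exact hx
    rw [eq_top_iff]
    intro g _
    apply main m (by omega) le_rfl g
    intro x hx
    exfalso
    apply hx
    have hmm : ((m:ℚ))/(m:ℚ) = 1 := div_self (ne_of_gt hmq)
    show (0:ℚ) ≤ qrep x ∧ qrep x < (m:ℚ)/(m:ℚ)
    rw [hmm]
    exact ⟨(qrep_mem x).1, (qrep_mem x).2⟩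
  · -- U ^ n ≠ univ
    have hpow : ∀ k : ℕ, 1 ≤ k → ∀ f ∈ U ^ k, ∀ x : AddCircle (1:ℚ),
        ∃ q : ℚ, |q| < (k:ℚ) / (2 * (n:ℚ)) ∧ f x = x + (q : AddCircle (1:ℚ)) := by
      intro k hk1
      induction k, hk1 using Nat.le_induction with
      | base =>
        intro f hf x
        rw [pow_one, hUdef] at hf
        obtain ⟨q, hq1, hq2⟩ := hf x
        refine ⟨q, ?_, hq2⟩
        rw [Nat.cast_one]
        exact hq1
      | succ k hk ih =>
        intro f hf x
        rw [pow_succ] at hf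
        obtain ⟨s, hs, t, ht, heq⟩ := Set.mem_mul.mp hf
        rw [hUdef] at ht
        obtain ⟨q₁, hq₁, hq₁e⟩ := ht x
        obtain ⟨q₂, hq₂, hq₂e⟩ := ih s hs (t x)
        refine ⟨q₁ + q₂, ?_, ?_⟩
        · have habs : |q₁ + q₂| ≤ |q₁| + |q₂| := abs_add_le _ _
          have hds : ((k:ℚ)+1) / (2*(n:ℚ)) = (k:ℚ)/(2*(n:ℚ)) + 1/(2*(n:ℚ)) := by
            rw [add_div]
          push_cast
          rw [hds]
          linarith
        · rw [← heq]
          show s (t x) = _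
          rw [hq₂e, hq₁e, coe_add_q]
          rw [add_assoc]
    intro hceq
    set ρ : Equiv.Perm (AddCircle (1:ℚ)) := Equiv.addLeft (((1:ℚ)/2 : ℚ) : AddCircle (1:ℚ)) with hρ
    have hρmem : ρ ∈ U ^ n := by rw [hceq]; exact Set.mem_univ _
    obtain ⟨q, hq, he⟩ := hpow n hn ρ hρmem 0
    have hρ0 : ρ 0 = (((1:ℚ)/2 : ℚ) : AddCircle (1:ℚ)) := by
      rw [hρ]
      show (((1:ℚ)/2 : ℚ) : AddCircle (1:ℚ)) + 0 = _
      rw [add_zero]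
    rw [hρ0, zero_add] at he
    have hsub : (1:ℚ)/2 - q ∈ AddSubgroup.zmultiples (1:ℚ) :=
      QuotientAddGroup.eq_iff_sub_mem.mp he
    obtain ⟨z, hz⟩ := AddSubgroup.mem_zmultiples_iff.mp hsub
    have hzq : (z:ℚ) = 1/2 - q := by
      rw [← hz, zsmul_eq_mul, mul_one]
    have hq2 : |q| < 1/2 := by
      have : (n:ℚ) / (2 * (n:ℚ)) = 1/2 := by
        field_simp
      rwa [this] at hq
    rw [abs_lt] at hq2
    have hz0 : (0:ℚ) < (z:ℚ) := by linarith
    have hz1 : (z:ℚ) < 1 := by linarith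
    have hz0' : (0:ℤ) < z := by exact_mod_cast hz0
    have hz1' : z < 1 := by exact_mod_cast hz1
    omega
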